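/- Let ε > 0 and δ ∈ (0,1), and choose any δ̄ ∈ (δ, 1). Let a ≥ (ε/(1-δ̄))·(1+√δ̄), and let Y₁, Y₂ be independent random variables, each uniformly distributed on [0, a]. Then P(|Y₁ - Y₂| ≤ ε) ≤ 1 - δ̄ < 1 - δ; in particular, the condition P(|Y₁ - Y₂| ≤ ε) ≥ 1 - δ fails. -/

import Mathlib

open MeasureTheory ProbabilityTheory

/-- The uniform probability measure on `[0, a]`: constant density `1/a` on
`[0, a]` and `0` elsewhere. -/
noncomputable def uniformIcc (a : ℝ) : Measure ℝ :=
  (ENNReal.ofReal a)⁻¹ • volume.restrict (Set.Icc 0 a)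

lemma contIntOnIoo {f : ℝ → ℝ} (hf : Continuous f) {u v : ℝ} (huv : u ≤ v) :
    IntegrableOn f (Set.Ioo u v) volume :=
  (intervalIntegrable_iff_integrableOn_Ioo_of_le huv).mp (hf.intervalIntegrable u v)

lemma tri_integral {b : ℝ} (hb : 0 ≤ b) : ∫ x in Set.Ioo 0 b, (b - x) = b^2/2 := by
  rw [← integral_Ioc_eq_integral_Ioo, ← intervalIntegral.integral_of_le hb,
    intervalIntegral.integral_sub intervalIntegrable_const intervalIntegral.intervalIntegrable_id]
  simp
  ring

lemma tri_integral₂ {c a : ℝ} (hb : c ≤ a) : ∫ x in Set.Ioo c a, (x - c) = (a - c)^2/2 := by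
  rw [← integral_Ioc_eq_integral_Ioo, ← intervalIntegral.integral_of_le hb,
    intervalIntegral.integral_sub intervalIntegral.intervalIntegrable_id intervalIntegrable_const]
  simp
  ring

/-- Part (ii) of Proposition 1: for any `ε > 0` and `δ ∈ (0,1)`, choosing
`δ̄ ∈ (δ,1)` and `a ≥ (ε/(1-δ̄))·(1+√δ̄)`, independent uniform random variables
`Y₁, Y₂` on `[0,a]` satisfy `P(|Y₁-Y₂| ≤ ε) ≤ 1-δ̄ < 1-δ`; in particular they
are not `(ε,δ)`-conformant. -/
theorem uniform_not_conformant
    {Ω : Type*} [MeasurableSpace Ω] (P : Measure Ω) [IsProbabilityMeasure P]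
    (ε δ δ' : ℝ) (hε : 0 < ε) (hδ : δ ∈ Set.Ioo (0 : ℝ) 1)
    (hδ' : δ' ∈ Set.Ioo δ 1)
    (a : ℝ) (ha : ε / (1 - δ') * (1 + Real.sqrt δ') ≤ a)
    (Y₁ Y₂ : Ω → ℝ) (hY₁ : Measurable Y₁) (hY₂ : Measurable Y₂)
    (hindep : IndepFun Y₁ Y₂ P)
    (hmap₁ : Measure.map Y₁ P = uniformIcc a)
    (hmap₂ : Measure.map Y₂ P = uniformIcc a) :
    (P {ω | |Y₁ ω - Y₂ ω| ≤ ε}).toReal ≤ 1 - δ' ∧ 1 - δ' < 1 - δ ∧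
      ¬(1 - δ ≤ (P {ω | |Y₁ ω - Y₂ ω| ≤ ε}).toReal) := by
  obtain ⟨hδ0, hδ1⟩ := hδ
  obtain ⟨hδδ', hδ'1⟩ := hδ'
  have hδ'0 : 0 < δ' := hδ0.trans hδδ'
  set s := Real.sqrt δ' with hs
  have hs0 : 0 < s := Real.sqrt_pos.mpr hδ'0
  have hs1 : s < 1 := by
    rw [hs, show (1:ℝ) = Real.sqrt 1 by simp]
    exact Real.sqrt_lt_sqrt hδ'0.le hδ'1
  have hss : s^2 = δ' := Real.sq_sqrt hδ'0.le
  have hεa : ε ≤ a * (1 - s) := by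
    have h1 : ε / (1 - δ') * (1 + s) = ε / (1 - s) := by
      have h2 : 1 - δ' = (1 - s) * (1 + s) := by nlinarith
      rw [h2]
      rw [div_mul_eq_mul_div, mul_comm (1 - s) (1 + s), ← div_div,
        mul_div_assoc, div_self (by linarith), mul_one]
    rw [h1, div_le_iff₀ (by linarith)] at ha
    linarith
  have ha0 : 0 < a := by nlinarith
  have haε : ε < a := by nlinarith
  set b := a - ε with hb
  have hb0 : 0 < b := by simp only [hb]; linarith
  have hbs : a * s ≤ b := by simp only [hb]; nlinarith
  -- measure setup
  set μ := uniformIcc a with hμ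
  have hanet : ENNReal.ofReal a ≠ 0 := by simp [ha0]
  have hμuniv : μ Set.univ = 1 := by
    rw [hμ, uniformIcc, Measure.smul_apply, Measure.restrict_apply MeasurableSet.univ,
      Set.univ_inter, Real.volume_Icc, sub_zero, smul_eq_mul,
      ENNReal.inv_mul_cancel hanet ENNReal.ofReal_ne_top]
  haveI hμprob : IsProbabilityMeasure μ := ⟨hμuniv⟩
  have hjoint : Measure.map (fun ω => (Y₁ ω, Y₂ ω)) P = μ.prod μ := by
    have h := (indepFun_iff_map_prod_eq_prod_map_map hY₁.aemeasurable hY₂.aemeasurable).mp hindep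
    rw [hmap₁, hmap₂] at h
    exact h
  set c := (ENNReal.ofReal a)⁻¹ with hc
  set I := Set.Icc (0:ℝ) a with hI
  have hprod : μ.prod μ = (c * c) • ((volume : Measure (ℝ×ℝ)).restrict (I ×ˢ I)) := by
    refine Measure.prod_eq fun u v hu hv => ?_
    rw [Measure.smul_apply, Measure.restrict_apply (hu.prod hv), Set.prod_inter_prod,
      Measure.volume_eq_prod ℝ ℝ, Measure.prod_prod]
    rw [hμ, uniformIcc, Measure.smul_apply, Measure.smul_apply,
      Measure.restrict_apply hu, Measure.restrict_apply hv]
    simp only [smul_eq_mul, ← hc, ← hI]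
    ring
  -- triangles
  set T₁ := regionBetween (fun x => x + ε) (fun _ => a) (Set.Ioo 0 b) with hT₁
  set T₂ := regionBetween (fun _ => (0:ℝ)) (fun x => x - ε) (Set.Ioo ε a) with hT₂
  have mT₁ : MeasurableSet T₁ :=
    measurableSet_regionBetween (by fun_prop) (by fun_prop) measurableSet_Ioo
  have mT₂ : MeasurableSet T₂ :=
    measurableSet_regionBetween (by fun_prop) (by fun_prop) measurableSet_Ioo
  have hsubT₁ : T₁ ⊆ I ×ˢ I := by
    rintro ⟨x, y⟩ ⟨hx, hy⟩
    simp only [Set.mem_Ioo] at hx hy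
    refine ⟨⟨hx.1.le, by simp only [hb] at hx; linarith [hx.2]⟩, ⟨by linarith [hy.1, hx.1], hy.2.le⟩⟩
  have hsubT₂ : T₂ ⊆ I ×ˢ I := by
    rintro ⟨x, y⟩ ⟨hx, hy⟩
    simp only [Set.mem_Ioo] at hx hy
    exact ⟨⟨by linarith [hx.1], hx.2.le⟩, ⟨hy.1.le, by linarith [hy.2, hx.2]⟩⟩
  have hvolT₁ : (volume : Measure (ℝ×ℝ)) T₁ = ENNReal.ofReal (b^2/2) := by
    rw [hT₁, Measure.volume_eq_prod ℝ ℝ,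
      volume_regionBetween_eq_integral
        (contIntOnIoo (by fun_prop) hb0.le) (contIntOnIoo (by fun_prop) hb0.le)
        measurableSet_Ioo (fun x hx => by simp only [Set.mem_Ioo, hb] at hx ⊢; linarith [hx.2])]
    congr 1
    rw [show ((fun _ => a) - fun x => x + ε : ℝ → ℝ) = fun x => b - x from
      funext fun x => by simp [hb]; ring]
    exact tri_integral hb0.le
  have hvolT₂ : (volume : Measure (ℝ×ℝ)) T₂ = ENNReal.ofReal (b^2/2) := by
    rw [hT₂, Measure.volume_eq_prod ℝ ℝ,
      volume_regionBetween_eq_integral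
        (contIntOnIoo (by fun_prop) haε.le) (contIntOnIoo (by fun_prop) haε.le)
        measurableSet_Ioo (fun x hx => by simp only [Set.mem_Ioo] at hx ⊢; linarith [hx.1])]
    congr 1
    rw [show ((fun x => x - ε) - (fun _ => (0:ℝ)) : ℝ → ℝ) = fun x => x - ε from
      funext fun x => by simp]
    rw [tri_integral₂ haε.le]
  -- events
  set pm := fun ω => (Y₁ ω, Y₂ ω) with hpm
  have hpmm : Measurable pm := hY₁.prodMk hY₂
  have hPT : ∀ T : Set (ℝ × ℝ), MeasurableSet T → P (pm ⁻¹' T) = (μ.prod μ) T := by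
    intro T hT
    rw [← hjoint, Measure.map_apply hpmm hT]
  have hπ : ∀ T : Set (ℝ × ℝ), MeasurableSet T → T ⊆ I ×ˢ I →
      (volume : Measure (ℝ×ℝ)) T = ENNReal.ofReal (b^2/2) →
      P (pm ⁻¹' T) = c * c * ENNReal.ofReal (b^2/2) := by
    intro T hT hsub hvol
    rw [hPT T hT, hprod, Measure.smul_apply, Measure.restrict_apply hT,
      Set.inter_eq_self_of_subset_left hsub, hvol, smul_eq_mul]
  have hP₁ := hπ T₁ mT₁ hsubT₁ hvolT₁
  have hP₂ := hπ T₂ mT₂ hsubT₂ hvolT₂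
  set A := {ω | |Y₁ ω - Y₂ ω| ≤ ε} with hA
  have hAm : MeasurableSet A := by
    have : A = pm ⁻¹' {p : ℝ × ℝ | |p.1 - p.2| ≤ ε} := rfl
    rw [this]
    exact hpmm (isClosed_le (by fun_prop) continuous_const).measurableSet
  -- disjointness
  have hd₁ : Disjoint A (pm ⁻¹' T₁) := by
    rw [Set.disjoint_left]
    intro ω hωA hω₁
    obtain ⟨hx, hy⟩ := hω₁
    simp only [Set.mem_Ioo] at hy
    have : |Y₁ ω - Y₂ ω| ≤ ε := hωA
    rw [abs_le] at this
    linarith [hy.1, this.1]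
  have hd₂ : Disjoint (A ∪ pm ⁻¹' T₁) (pm ⁻¹' T₂) := by
    rw [Set.disjoint_left]
    rintro ω (hωA | hω₁) hω₂
    · obtain ⟨hx, hy⟩ := hω₂
      simp only [Set.mem_Ioo] at hy
      have : |Y₁ ω - Y₂ ω| ≤ ε := hωA
      rw [abs_le] at this
      linarith [hy.2, this.2]
    · obtain ⟨hx₁, hy₁⟩ := hω₁
      obtain ⟨hx₂, hy₂⟩ := hω₂
      simp only [Set.mem_Ioo] at hy₁ hy₂
      linarith [hy₁.1, hy₂.2, hε]
  have hsum : P A + (P (pm ⁻¹' T₁) + P (pm ⁻¹' T₂)) ≤ 1 := by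
    calc P A + (P (pm ⁻¹' T₁) + P (pm ⁻¹' T₂))
        = P (A ∪ pm ⁻¹' T₁) + P (pm ⁻¹' T₂) := by
          rw [measure_union hd₁ (hpmm mT₁), add_assoc]
      _ = P ((A ∪ pm ⁻¹' T₁) ∪ pm ⁻¹' T₂) := (measure_union hd₂ (hpmm mT₂)).symm
      _ ≤ 1 := prob_le_one
  have hlow : ENNReal.ofReal δ' ≤ P (pm ⁻¹' T₁) + P (pm ⁻¹' T₂) := by
    rw [hP₁, hP₂, ← mul_add, hc, ← ENNReal.ofReal_inv_of_pos ha0, ← ENNReal.ofReal_mul (by positivity),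
      ← ENNReal.ofReal_add (by positivity) (by positivity), ← ENNReal.ofReal_mul (by positivity)]
    apply ENNReal.ofReal_le_ofReal
    rw [show b^2/2 + b^2/2 = b^2 by ring]
    have h3 : (a*s)*(a*s) ≤ b*b := mul_le_mul hbs hbs (by positivity) hb0.le
    have h2 : a^2 * δ' ≤ b^2 := by nlinarith [h3, hss]
    rw [show a⁻¹ * a⁻¹ * b^2 = b^2/a^2 by field_simp, le_div_iff₀ (by positivity)]
    nlinarith [h2]
  have hkey : P A + ENNReal.ofReal δ' ≤ 1 := le_trans (add_le_add le_rfl hlow) hsum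
  have hfin : P A ≠ ⊤ := measure_ne_top P A
  have hmain : (P A).toReal ≤ 1 - δ' := by
    have := ENNReal.toReal_mono (by simp) hkey
    rw [ENNReal.toReal_add hfin ENNReal.ofReal_ne_top, ENNReal.toReal_ofReal hδ'0.le,
      ENNReal.toReal_one] at this
    linarith
  exact ⟨hmain, by linarith, fun h => by linarith⟩
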